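/- Let K = 2 and assume for each k ∈ {1,2} that either (a_{k0} > 1 and a_{k1} > 1) or (min(a_{k0}, a_{k1}) = 0 and max(a_{k0}, a_{k1}) = a_{k•} > 1). Then the intercept-unpenalized LOOCV squared prediction error satisfies P̃E(0) ≤ P̃E(λ) for all λ ≥ 0 if and only if min(a_{k0}, a_{k1}) = 0 and a_{k•} > 1 for both k = 1 and k = 2; i.e. P̃E is minimized at λ = 0 if and only if there is complete separation in the data. -/

import Mathlib

/-- Denominator of the intercept-unpenalized leave-one-out ridge estimates for category
`k` (with `j` the other index): `(a_{k•} − 1) a_{j•} + 4λ(n − 1)`. -/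
noncomputable def tildeDen (a0 a1 : Fin 2 → ℕ) (k j : Fin 2) (l : ℝ) : ℝ :=
  ((a0 k : ℝ) + (a1 k : ℝ) - 1) * ((a0 j : ℝ) + (a1 j : ℝ)) +
    4 * l * ((a0 0 : ℝ) + (a1 0 : ℝ) + (a0 1 : ℝ) + (a1 1 : ℝ) - 1)

/-- Intercept-unpenalized leave-one-out estimate
`π̃_{k0}(λ) = (a_{k1} a_{j•} + 4λ a_{•1}) / ((a_{k•} − 1) a_{j•} + 4λ(n − 1))`. -/
noncomputable def tildePi0 (a0 a1 : Fin 2 → ℕ) (k j : Fin 2) (l : ℝ) : ℝ :=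
  ((a1 k : ℝ) * ((a0 j : ℝ) + (a1 j : ℝ)) + 4 * l * ((a1 0 : ℝ) + (a1 1 : ℝ))) /
    tildeDen a0 a1 k j l

/-- Intercept-unpenalized leave-one-out estimate
`π̃_{k1}(λ) = ((a_{k1} − 1) a_{j•} + 4λ(a_{•1} − 1)) / ((a_{k•} − 1) a_{j•} + 4λ(n − 1))`. -/
noncomputable def tildePi1 (a0 a1 : Fin 2 → ℕ) (k j : Fin 2) (l : ℝ) : ℝ :=
  (((a1 k : ℝ) - 1) * ((a0 j : ℝ) + (a1 j : ℝ)) +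
      4 * l * ((a1 0 : ℝ) + (a1 1 : ℝ) - 1)) / tildeDen a0 a1 k j l

/-- Intercept-unpenalized LOOCV deviance for `K = 2`; summands with a zero count
coefficient vanish (in Lean, `0 * log _ = 0`). -/
noncomputable def dTilde (a0 a1 : Fin 2 → ℕ) (l : ℝ) : ℝ :=
  -2 * (((a0 0 : ℝ) * Real.log (1 - tildePi0 a0 a1 0 1 l) +
          (a1 0 : ℝ) * Real.log (tildePi1 a0 a1 0 1 l)) +
        ((a0 1 : ℝ) * Real.log (1 - tildePi0 a0 a1 1 0 l) +
          (a1 1 : ℝ) * Real.log (tildePi1 a0 a1 1 0 l)))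

/-- Intercept-unpenalized LOOCV squared prediction error for `K = 2`. -/
noncomputable def peTilde (a0 a1 : Fin 2 → ℕ) (l : ℝ) : ℝ :=
  (1 / ((a0 0 : ℝ) + (a1 0 : ℝ) + (a0 1 : ℝ) + (a1 1 : ℝ))) *
    (((a0 0 : ℝ) * (tildePi0 a0 a1 0 1 l) ^ 2 +
        (a1 0 : ℝ) * (1 - tildePi1 a0 a1 0 1 l) ^ 2) +
     ((a0 1 : ℝ) * (tildePi0 a0 a1 1 0 l) ^ 2 +
        (a1 1 : ℝ) * (1 - tildePi1 a0 a1 1 0 l) ^ 2))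

private lemma hasDerivAt_aux (A B C D : ℝ) (hC : C ≠ 0) :
    HasDerivAt (fun l : ℝ => (A + 4 * l * B) / (C + 4 * l * D))
      ((4 * B * C - A * (4 * D)) / C ^ 2) 0 := by
  have h1 : HasDerivAt (fun l : ℝ => A + 4 * l * B) (4 * B) 0 := by
    have := (((hasDerivAt_id (0:ℝ)).const_mul 4).mul_const B).const_add A
    simpa using this
  have h2 : HasDerivAt (fun l : ℝ => C + 4 * l * D) (4 * D) 0 := by
    have := (((hasDerivAt_id (0:ℝ)).const_mul 4).mul_const D).const_add C
    simpa using this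
  have h3 := h1.div h2 (by simpa using hC)
  exact h3.congr_deriv (by norm_num)

private lemma cat_deriv (A B P s t : ℝ) (hP : (A + B - 1) * P ≠ 0) :
    HasDerivAt (fun l : ℝ =>
      A * ((B * P + 4 * l * s) / ((A + B - 1) * P + 4 * l * t)) ^ 2 +
        B * (1 - ((B - 1) * P + 4 * l * (s - 1)) / ((A + B - 1) * P + 4 * l * t)) ^ 2)
      (8 * A * B * (A + B - 1 - t) / ((A + B - 1) ^ 3 * P)) 0 := by
  have r0 := hasDerivAt_aux (B * P) s ((A + B - 1) * P) t hP
  have r1 := hasDerivAt_aux ((B - 1) * P) (s - 1) ((A + B - 1) * P) t hP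
  have H := ((r0.pow 2).const_mul A).add (((r1.const_sub 1).pow 2).const_mul B)
  refine H.congr_deriv ?_
  simp only [Nat.reduceSub, pow_one, Nat.cast_ofNat, mul_zero, zero_mul, add_zero]
  have hab : A + B - 1 ≠ 0 := fun hc => hP (by rw [hc]; ring)
  have hp : P ≠ 0 := fun hc => hP (by rw [hc]; ring)
  field_simp
  ring

private lemma key_deriv (a0 a1 : Fin 2 → ℕ) (h0 : 1 < a0 0 + a1 0) (h1 : 1 < a0 1 + a1 1) :
    HasDerivAt (peTilde a0 a1)
      ((1 / ((a0 0 : ℝ) + (a1 0 : ℝ) + (a0 1 : ℝ) + (a1 1 : ℝ))) *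
        (8 * (a0 0 : ℝ) * (a1 0 : ℝ) *
            ((a0 0 : ℝ) + (a1 0 : ℝ) - 1 -
              ((a0 0 : ℝ) + (a1 0 : ℝ) + (a0 1 : ℝ) + (a1 1 : ℝ) - 1)) /
            (((a0 0 : ℝ) + (a1 0 : ℝ) - 1) ^ 3 * ((a0 1 : ℝ) + (a1 1 : ℝ))) +
         8 * (a0 1 : ℝ) * (a1 1 : ℝ) *
            ((a0 1 : ℝ) + (a1 1 : ℝ) - 1 -
              ((a0 0 : ℝ) + (a1 0 : ℝ) + (a0 1 : ℝ) + (a1 1 : ℝ) - 1)) /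
            (((a0 1 : ℝ) + (a1 1 : ℝ) - 1) ^ 3 * ((a0 0 : ℝ) + (a1 0 : ℝ))))) 0 := by
  have c0 : (1 : ℝ) < (a0 0 : ℝ) + (a1 0 : ℝ) := by exact_mod_cast h0
  have c1 : (1 : ℝ) < (a0 1 : ℝ) + (a1 1 : ℝ) := by exact_mod_cast h1
  have hP0 : ((a0 0 : ℝ) + (a1 0 : ℝ) - 1) * ((a0 1 : ℝ) + (a1 1 : ℝ)) ≠ 0 :=
    ne_of_gt (by nlinarith)
  have hP1 : ((a0 1 : ℝ) + (a1 1 : ℝ) - 1) * ((a0 0 : ℝ) + (a1 0 : ℝ)) ≠ 0 :=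
    ne_of_gt (by nlinarith)
  have C0 := cat_deriv (a0 0 : ℝ) (a1 0 : ℝ) ((a0 1 : ℝ) + (a1 1 : ℝ))
    ((a1 0 : ℝ) + (a1 1 : ℝ))
    ((a0 0 : ℝ) + (a1 0 : ℝ) + (a0 1 : ℝ) + (a1 1 : ℝ) - 1) hP0
  have C1 := cat_deriv (a0 1 : ℝ) (a1 1 : ℝ) ((a0 0 : ℝ) + (a1 0 : ℝ))
    ((a1 0 : ℝ) + (a1 1 : ℝ))
    ((a0 0 : ℝ) + (a1 0 : ℝ) + (a0 1 : ℝ) + (a1 1 : ℝ) - 1) hP1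
  have H := (C0.add C1).const_mul
    (1 / ((a0 0 : ℝ) + (a1 0 : ℝ) + (a0 1 : ℝ) + (a1 1 : ℝ)))
  show HasDerivAt (fun l => peTilde a0 a1 l) _ 0
  simp only [peTilde, tildePi0, tildePi1, tildeDen]
  exact H

private lemma term_zero (a0 a1 : Fin 2 → ℕ) (k j : Fin 2)
    (hmin : min (a0 k) (a1 k) = 0) (hk : 1 < a0 k + a1 k) (hj : 0 < a0 j + a1 j) :
    (a0 k : ℝ) * (tildePi0 a0 a1 k j 0) ^ 2 +
      (a1 k : ℝ) * (1 - tildePi1 a0 a1 k j 0) ^ 2 = 0 := by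
  have hcase : a0 k = 0 ∨ a1 k = 0 := by omega
  rcases hcase with hz | hz
  · have h1k : 2 ≤ a1 k := by omega
    have hjj : (0:ℝ) < (a0 j : ℝ) + (a1 j : ℝ) := by exact_mod_cast hj
    have h1kr : (2:ℝ) ≤ (a1 k : ℝ) := by exact_mod_cast h1k
    have hpi : tildePi1 a0 a1 k j 0 = 1 := by
      simp only [tildePi1, tildeDen, hz, Nat.cast_zero, mul_zero, zero_mul, add_zero,
        zero_add]
      rw [div_self]
      intro hcon
      rcases mul_eq_zero.mp hcon with hc | hc
      · linarith
      · linarith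
    rw [hpi, hz]
    simp
  · have hpi : tildePi0 a0 a1 k j 0 = 0 := by
      simp [tildePi0, hz]
    rw [hpi, hz]
    simp

/-- `K = 2`, each category either has both counts `> 1` or is separated with `a_{k•} > 1`:
the intercept-unpenalized LOOCV squared prediction error is minimized at `λ = 0` if and
only if there is complete separation in the data. -/
theorem stmt19 (a0 a1 : Fin 2 → ℕ)
    (h : ∀ k, (1 < a0 k ∧ 1 < a1 k) ∨
      (min (a0 k) (a1 k) = 0 ∧ max (a0 k) (a1 k) = a0 k + a1 k ∧ 1 < a0 k + a1 k)) :
    (∀ lam : ℝ, 0 ≤ lam → peTilde a0 a1 0 ≤ peTilde a0 a1 lam) ↔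
      (∀ k, min (a0 k) (a1 k) = 0 ∧ 1 < a0 k + a1 k) := by
  have hsum : ∀ k : Fin 2, 1 < a0 k + a1 k := by
    intro k; rcases h k with ⟨h1, h2⟩ | ⟨_, _, h3⟩ <;> omega
  have e0 : (1:ℝ) < (a0 0 : ℝ) + (a1 0 : ℝ) := by exact_mod_cast hsum 0
  have e1 : (1:ℝ) < (a0 1 : ℝ) + (a1 1 : ℝ) := by exact_mod_cast hsum 1
  constructor
  · intro hmin k
    rcases h k with ⟨hk0, hk1⟩ | ⟨hm, _, hs⟩
    · exfalso
      have hd := key_deriv a0 a1 (hsum 0) (hsum 1)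
      set d0 : ℝ := 8 * (a0 0 : ℝ) * (a1 0 : ℝ) *
          ((a0 0 : ℝ) + (a1 0 : ℝ) - 1 -
            ((a0 0 : ℝ) + (a1 0 : ℝ) + (a0 1 : ℝ) + (a1 1 : ℝ) - 1)) /
          (((a0 0 : ℝ) + (a1 0 : ℝ) - 1) ^ 3 * ((a0 1 : ℝ) + (a1 1 : ℝ))) with hd0def
      set d1 : ℝ := 8 * (a0 1 : ℝ) * (a1 1 : ℝ) *
          ((a0 1 : ℝ) + (a1 1 : ℝ) - 1 -
            ((a0 0 : ℝ) + (a1 0 : ℝ) + (a0 1 : ℝ) + (a1 1 : ℝ) - 1)) /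
          (((a0 1 : ℝ) + (a1 1 : ℝ) - 1) ^ 3 * ((a0 0 : ℝ) + (a1 0 : ℝ))) with hd1def
      have q0 : (0:ℝ) < ((a0 0 : ℝ) + (a1 0 : ℝ) - 1) ^ 3 * ((a0 1 : ℝ) + (a1 1 : ℝ)) :=
        mul_pos (pow_pos (by linarith) 3) (by linarith)
      have q1 : (0:ℝ) < ((a0 1 : ℝ) + (a1 1 : ℝ) - 1) ^ 3 * ((a0 0 : ℝ) + (a1 0 : ℝ)) :=
        mul_pos (pow_pos (by linarith) 3) (by linarith)
      have n0 : 8 * (a0 0 : ℝ) * (a1 0 : ℝ) *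
          ((a0 0 : ℝ) + (a1 0 : ℝ) - 1 -
            ((a0 0 : ℝ) + (a1 0 : ℝ) + (a0 1 : ℝ) + (a1 1 : ℝ) - 1)) =
          -(8 * (a0 0 : ℝ) * (a1 0 : ℝ) * ((a0 1 : ℝ) + (a1 1 : ℝ))) := by ring
      have n1 : 8 * (a0 1 : ℝ) * (a1 1 : ℝ) *
          ((a0 1 : ℝ) + (a1 1 : ℝ) - 1 -
            ((a0 0 : ℝ) + (a1 0 : ℝ) + (a0 1 : ℝ) + (a1 1 : ℝ) - 1)) =
          -(8 * (a0 1 : ℝ) * (a1 1 : ℝ) * ((a0 0 : ℝ) + (a1 0 : ℝ))) := by ring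
      have hd0le : d0 ≤ 0 := by
        rw [hd0def, n0]
        apply div_nonpos_of_nonpos_of_nonneg _ q0.le
        have : (0:ℝ) ≤ 8 * (a0 0 : ℝ) * (a1 0 : ℝ) * ((a0 1 : ℝ) + (a1 1 : ℝ)) := by
          positivity
        linarith
      have hd1le : d1 ≤ 0 := by
        rw [hd1def, n1]
        apply div_nonpos_of_nonpos_of_nonneg _ q1.le
        have : (0:ℝ) ≤ 8 * (a0 1 : ℝ) * (a1 1 : ℝ) * ((a0 0 : ℝ) + (a1 0 : ℝ)) := by
          positivity
        linarith
      have hdsum : d0 + d1 < 0 := by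
        have hk01 : k = 0 ∨ k = 1 := by omega
        rcases hk01 with rfl | rfl
        · have hA : (2:ℝ) ≤ (a0 0 : ℝ) := by exact_mod_cast hk0
          have hB : (2:ℝ) ≤ (a1 0 : ℝ) := by exact_mod_cast hk1
          have hstrict : d0 < 0 := by
            rw [hd0def, n0]
            apply div_neg_of_neg_of_pos _ q0
            have hpos : (0:ℝ) < 8 * (a0 0 : ℝ) * (a1 0 : ℝ) * ((a0 1 : ℝ) + (a1 1 : ℝ)) :=
              mul_pos (mul_pos (mul_pos (by norm_num) (by linarith)) (by linarith))
                (by linarith)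
            linarith
          linarith
        · have hA : (2:ℝ) ≤ (a0 1 : ℝ) := by exact_mod_cast hk0
          have hB : (2:ℝ) ≤ (a1 1 : ℝ) := by exact_mod_cast hk1
          have hstrict : d1 < 0 := by
            rw [hd1def, n1]
            apply div_neg_of_neg_of_pos _ q1
            have hpos : (0:ℝ) < 8 * (a0 1 : ℝ) * (a1 1 : ℝ) * ((a0 0 : ℝ) + (a1 0 : ℝ)) :=
              mul_pos (mul_pos (mul_pos (by norm_num) (by linarith)) (by linarith))
                (by linarith)
            linarith
          linarith
      have hdneg : (1 / ((a0 0 : ℝ) + (a1 0 : ℝ) + (a0 1 : ℝ) + (a1 1 : ℝ))) *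
          (d0 + d1) < 0 := by
        apply mul_neg_of_pos_of_neg _ hdsum
        have : (0:ℝ) < (a0 0 : ℝ) + (a1 0 : ℝ) + (a0 1 : ℝ) + (a1 1 : ℝ) := by
          have h3 : (0:ℝ) ≤ (a0 1 : ℝ) := Nat.cast_nonneg _
          have h4 : (0:ℝ) ≤ (a1 1 : ℝ) := Nat.cast_nonneg _
          linarith
        positivity
      have htend := hasDerivAt_iff_tendsto_slope.mp hd
      have hev : ∀ᶠ z in nhdsWithin (0:ℝ) {(0:ℝ)}ᶜ, slope (peTilde a0 a1) 0 z < 0 :=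
        htend.eventually (gt_mem_nhds hdneg)
      have hle : nhdsWithin (0:ℝ) (Set.Ioi 0) ≤ nhdsWithin (0:ℝ) {(0:ℝ)}ᶜ :=
        nhdsWithin_mono 0 (fun x hx => ne_of_gt hx)
      obtain ⟨x, hx1, hx2⟩ := ((hev.filter_mono hle).and self_mem_nhdsWithin).exists
      have hx0 : (0:ℝ) < x := hx2
      rw [slope_def_field] at hx1
      have hnum : peTilde a0 a1 x - peTilde a0 a1 0 < 0 := by
        rcases div_neg_iff.mp hx1 with ⟨_, hc⟩ | ⟨hc, _⟩
        · linarith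
        · exact hc
      have := hmin x hx0.le
      linarith
    · exact ⟨hm, hs⟩
  · intro hsep lam hlam
    have hpe0 : peTilde a0 a1 0 = 0 := by
      have hj0 : 0 < a0 1 + a1 1 := by have := hsum 1; omega
      have hj1 : 0 < a0 0 + a1 0 := by have := hsum 0; omega
      have t0 := term_zero a0 a1 0 1 (hsep 0).1 (hsum 0) hj0
      have t1 := term_zero a0 a1 1 0 (hsep 1).1 (hsum 1) hj1
      simp only [peTilde, t0, t1]
      ring
    rw [hpe0]
    have : (0:ℝ) ≤ (a0 0 : ℝ) + (a1 0 : ℝ) + (a0 1 : ℝ) + (a1 1 : ℝ) := by positivity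
    unfold peTilde
    positivity
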